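/- Let ρ ≠ 0 and μ ≠ 0 with D := ρ² − 4μ²ρ > 0, and set t_± = (ρ ± √D)/(2ρ), x_± = e^{t_±}. Define h(x) := x·(ρ·log x·(1 − log x) − μ²)/(log x)² for x > 0, x ≠ 1 (so h(x) = Q₂(x,0)). Then h(x_+) = h(x_−) = 0, and the derivative of h satisfies h'(x_+) = −√D/t_+² < 0 and h'(x_−) = +√D/t_−² > 0. Consequently the linearization matrix [[0,1],[h'(x_±),0]] of the phase-plane system at the singular point (x_+,0) has two purely imaginary eigenvalues (a centre), while at (x_−,0) it has two real eigenvalues of opposite sign (a saddle point). -/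

import Mathlib

lemma key_deriv (μ ρ t : ℝ) (ht : t ≠ 0) (hr : ρ * t * (1 - t) - μ ^ 2 = 0) :
    HasDerivAt (fun x => x * (ρ * Real.log x * (1 - Real.log x) - μ ^ 2) / (Real.log x) ^ 2)
      (ρ * (1 - 2 * t) / t ^ 2) (Real.exp t) := by
  set x0 := Real.exp t with hx0
  have hx0pos : 0 < x0 := Real.exp_pos t
  have hx0ne : x0 ≠ 0 := ne_of_gt hx0pos
  have hlogx0 : Real.log x0 = t := Real.log_exp t
  have hlog : HasDerivAt Real.log x0⁻¹ x0 := Real.hasDerivAt_log (ne_of_gt hx0pos)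
  have hexpr : HasDerivAt (fun x => ρ * Real.log x * (1 - Real.log x) - μ ^ 2)
      ((ρ * x0⁻¹) * (1 - t) + (ρ * t) * (0 - x0⁻¹)) x0 := by
    have h1 : HasDerivAt (fun x => ρ * Real.log x) (ρ * x0⁻¹) x0 := hlog.const_mul ρ
    have h2 : HasDerivAt (fun x => 1 - Real.log x) (0 - x0⁻¹) x0 :=
      (hasDerivAt_const x0 (1:ℝ)).sub hlog
    have := (h1.mul h2).sub_const (μ ^ 2)
    simpa [hlogx0] using this
  have hN : HasDerivAt (fun x => x * (ρ * Real.log x * (1 - Real.log x) - μ ^ 2))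
      (1 * (ρ * t * (1 - t) - μ ^ 2) + x0 * ((ρ * x0⁻¹) * (1 - t) + (ρ * t) * (0 - x0⁻¹))) x0 := by
    have := (hasDerivAt_id x0).mul hexpr
    exact this.congr_deriv (by simp [hlogx0])
  have hden : HasDerivAt (fun x => (Real.log x) ^ 2) ((2 : ℕ) * t ^ 1 * x0⁻¹) x0 := by
    have := hlog.pow 2
    exact this.congr_deriv (by simp [hlogx0])
  have hdne : (Real.log x0) ^ 2 ≠ 0 := by
    rw [hlogx0]; exact pow_ne_zero 2 ht
  have H := hN.div hden hdne
  rw [hlogx0] at H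
  have heq : ((1 * (ρ * t * (1 - t) - μ ^ 2) + x0 * ((ρ * x0⁻¹) * (1 - t) + (ρ * t) * (0 - x0⁻¹)))
        * t ^ 2 - x0 * (ρ * t * (1 - t) - μ ^ 2) * ((2 : ℕ) * t ^ 1 * x0⁻¹)) / (t ^ 2) ^ 2
      = ρ * (1 - 2 * t) / t ^ 2 := by
    rw [hr]
    field_simp
    ring
  rw [heq] at H
  exact H

lemma det_lem (c : ℝ) (z : ℂ) :
    Matrix.det (z • (1 : Matrix (Fin 2) (Fin 2) ℂ) - !![0, 1; Complex.ofReal c, 0])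
      = z ^ 2 - (c : ℂ) := by
  have : z • (1 : Matrix (Fin 2) (Fin 2) ℂ) - !![0, 1; Complex.ofReal c, 0]
      = !![z, -1; -(c : ℂ), z] := by
    ext i j
    fin_cases i <;> fin_cases j <;>
      simp [Matrix.one_apply]
  rw [this, Matrix.det_fin_two_of]
  ring

/-- Let `D = ρ² − 4μ²ρ > 0`, `t_± = (ρ ± √D)/(2ρ)`, `x_± = e^{t_±}`, and let
`h(x) = x(ρ log x (1 − log x) − μ²)/(log x)²` (that is, `h(x) = Q₂(x,0)` for the
phase-plane field of the curvature energy `Θ_μ` in the 2-space form of curvature `ρ`).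
Then `h(x₊) = h(x₋) = 0`, `h'(x₊) = −√D/t₊² < 0`, `h'(x₋) = √D/t₋² > 0`, and the
linearization matrix `[[0,1],[h'(x_±),0]]` of the system at `(x₊,0)` has two purely
imaginary eigenvalues (a centre), while at `(x₋,0)` it has two real eigenvalues of
opposite sign (a saddle point). -/
theorem linearization_at_singular_points (μ ρ : ℝ) (hρ : ρ ≠ 0) (hμ : μ ≠ 0)
    (D tp tm xp xm : ℝ) (hD : D = ρ ^ 2 - 4 * μ ^ 2 * ρ) (hDpos : 0 < D)
    (htp : tp = (ρ + Real.sqrt D) / (2 * ρ)) (htm : tm = (ρ - Real.sqrt D) / (2 * ρ))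
    (hxp : xp = Real.exp tp) (hxm : xm = Real.exp tm)
    (h : ℝ → ℝ)
    (hh : h = fun x => x * (ρ * Real.log x * (1 - Real.log x) - μ ^ 2) / (Real.log x) ^ 2) :
    h xp = 0 ∧ h xm = 0 ∧
    deriv h xp = -Real.sqrt D / tp ^ 2 ∧ deriv h xp < 0 ∧
    deriv h xm = Real.sqrt D / tm ^ 2 ∧ 0 < deriv h xm ∧
    (∃ ω : ℝ, ω ≠ 0 ∧ ∀ z : ℂ,
      Matrix.det (z • (1 : Matrix (Fin 2) (Fin 2) ℂ)
          - !![0, 1; Complex.ofReal (deriv h xp), 0]) = 0 ↔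
        z = Complex.I * ω ∨ z = -(Complex.I * ω)) ∧
    (∃ a b : ℝ, a < 0 ∧ 0 < b ∧ ∀ z : ℂ,
      Matrix.det (z • (1 : Matrix (Fin 2) (Fin 2) ℂ)
          - !![0, 1; Complex.ofReal (deriv h xm), 0]) = 0 ↔
        z = (a : ℂ) ∨ z = (b : ℂ)) := by
  set s := Real.sqrt D with hsdef
  have hs2 : s ^ 2 = D := Real.sq_sqrt hDpos.le
  have hspos : 0 < s := Real.sqrt_pos.mpr hDpos
  -- product of roots, nonvanishing of tp, tm
  have hprod : tp * tm = μ ^ 2 / ρ := by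
    rw [htp, htm]
    field_simp
    linear_combination (-1) * hs2 + (-1) * hD
  have hμ2 : μ ^ 2 ≠ 0 := pow_ne_zero 2 hμ
  have hprodne : tp * tm ≠ 0 := by rw [hprod]; exact div_ne_zero hμ2 hρ
  have htpne : tp ≠ 0 := fun hz => hprodne (by rw [hz, zero_mul])
  have htmne : tm ≠ 0 := fun hz => hprodne (by rw [hz, mul_zero])
  -- root conditions
  have hrp : ρ * tp * (1 - tp) - μ ^ 2 = 0 := by
    rw [htp]
    field_simp
    linear_combination (-1) * hs2 + (-1) * hD
  have hrm : ρ * tm * (1 - tm) - μ ^ 2 = 0 := by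
    rw [htm]
    field_simp
    linear_combination (-1) * hs2 + (-1) * hD
  -- values of h
  have hvp : h xp = 0 := by
    rw [hh, hxp]
    simp only [Real.log_exp]
    rw [hrp]
    simp
  have hvm : h xm = 0 := by
    rw [hh, hxm]
    simp only [Real.log_exp]
    rw [hrm]
    simp
  -- derivatives
  have hdp : deriv h xp = -s / tp ^ 2 := by
    rw [hh, hxp]
    rw [(key_deriv μ ρ tp htpne hrp).deriv]
    congr 1
    rw [htp]
    field_simp
    ring
  have hdm : deriv h xm = s / tm ^ 2 := by
    rw [hh, hxm]
    rw [(key_deriv μ ρ tm htmne hrm).deriv]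
    congr 1
    rw [htm]
    field_simp
    ring
  have htp2pos : 0 < tp ^ 2 := by positivity
  have htm2pos : 0 < tm ^ 2 := by positivity
  have hdpneg : deriv h xp < 0 := by
    rw [hdp]; exact div_neg_of_neg_of_pos (neg_neg_of_pos hspos) htp2pos
  have hdmpos : 0 < deriv h xm := by
    rw [hdm]; exact div_pos hspos htm2pos
  refine ⟨hvp, hvm, by rw [hdp], hdpneg, by rw [hdm], hdmpos, ?_, ?_⟩
  · -- centre
    set c := deriv h xp with hc
    refine ⟨Real.sqrt (-c), ?_, ?_⟩
    · exact ne_of_gt (Real.sqrt_pos.mpr (neg_pos.mpr hdpneg))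
    · intro z
      have hω2 : (Real.sqrt (-c)) ^ 2 = -c := Real.sq_sqrt (neg_pos.mpr hdpneg).le
      rw [det_lem]
      have hfac : z ^ 2 - (c : ℂ)
          = (z - Complex.I * (Real.sqrt (-c) : ℝ)) * (z - -(Complex.I * (Real.sqrt (-c) : ℝ))) := by
        have : ((Real.sqrt (-c) : ℝ) : ℂ) ^ 2 = -(c : ℂ) := by
          rw [← Complex.ofReal_pow, hω2]; push_cast; ring
        have hI : Complex.I ^ 2 = -1 := Complex.I_sq
        linear_combination (-1 : ℂ) * this + ((Real.sqrt (-c) : ℝ) : ℂ) ^ 2 * hI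
      rw [hfac, mul_eq_zero, sub_eq_zero, sub_eq_zero]
  · -- saddle
    set c := deriv h xm with hc
    refine ⟨-Real.sqrt c, Real.sqrt c, ?_, Real.sqrt_pos.mpr hdmpos, ?_⟩
    · exact neg_neg_of_pos (Real.sqrt_pos.mpr hdmpos)
    · intro z
      have hb2 : (Real.sqrt c) ^ 2 = c := Real.sq_sqrt hdmpos.le
      rw [det_lem]
      have hfac : z ^ 2 - (c : ℂ)
          = (z - ((-Real.sqrt c : ℝ) : ℂ)) * (z - ((Real.sqrt c : ℝ) : ℂ)) := by
        have : ((Real.sqrt c : ℝ) : ℂ) ^ 2 = (c : ℂ) := by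
          rw [← Complex.ofReal_pow, hb2]
        push_cast
        linear_combination this
      rw [hfac, mul_eq_zero, sub_eq_zero, sub_eq_zero]
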